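/- Let T be a finite tree with vertex set V, let X ⊆ V contain every leaf of T, and let {A, B} be a partition of X into two nonempty sets such that: (i) no edge of T induces the X-split {A, B}; and (ii) for every edge e of T, the X-split induced by e is compatible with {A, B}. Then there exists a unique vertex v ∈ V such that for every connected component W (given by its vertex set) of T with v deleted, either X ∩ W ⊆ A or X ∩ W ⊆ B. -/

import Mathlib

open SimpleGraph

private def Side {V : Type*} (G : SimpleGraph V) (u v : V) : Set V :=
  {x | (G.deleteEdges {s(u, v)}).Reachable u x}

private lemma Side_def {V : Type*} (G : SimpleGraph V) (u v : V) :
    Side G u v = {x | (G.deleteEdges {s(u, v)}).Reachable u x} := rfl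

section aux
variable {V : Type*}

/-- Walks avoiding a vertex `b` give reachability after deleting any edge containing `b`. -/
private lemma walk_avoid {G : SimpleGraph V} {a x b : V} (p : G.Walk a x)
    (hb : b ∉ p.support) (e : Sym2 V) (hbe : b ∈ e) :
    (G.deleteEdges {e}).Reachable a x := by
  refine ⟨p.toDeleteEdges _ fun e' he' => ?_⟩
  simp only [Set.mem_singleton_iff]
  rintro rfl
  induction e' using Sym2.ind with
  | _ s t =>
    rcases Sym2.mem_iff.mp hbe with rfl | rfl
    · exact hb (p.fst_mem_support_of_mem_edges he')
    · exact hb (p.snd_mem_support_of_mem_edges he')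

private lemma mapLe_support {G H : SimpleGraph V} (hle : G ≤ H) {a b : V} (p : G.Walk a b) :
    (p.mapLe hle).support = p.support := by
  rw [Walk.mapLe, Walk.support_map, show ⇑(Hom.ofLE hle) = id from rfl,
    List.map_id]

private lemma walk_avoid' {H G : SimpleGraph V} (hle : H ≤ G) {a x b : V} (p : H.Walk a x)
    (hb : b ∉ p.support) (e : Sym2 V) (hbe : b ∈ e) :
    (G.deleteEdges {e}).Reachable a x :=
  walk_avoid (p.mapLe hle) (by rw [mapLe_support]; exact hb) e hbe

private lemma reach_notMem {H : SimpleGraph V} [DecidableEq V] {u v x : V}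
    (hnr : ¬ H.Reachable u v) (hx : H.Reachable u x) :
    ∃ p : H.Walk u x, v ∉ p.support := by
  obtain ⟨p⟩ := hx
  exact ⟨p, fun hv => hnr ⟨p.takeUntil v hv⟩⟩

private lemma aux_closed {G : SimpleGraph V} {u v x a : V} (p : G.Walk a x)
    (h : (G.deleteEdges {s(u,v)}).Reachable u a ∨ (G.deleteEdges {s(u,v)}).Reachable v a) :
    (G.deleteEdges {s(u,v)}).Reachable u x ∨ (G.deleteEdges {s(u,v)}).Reachable v x := by
  induction p with
  | nil => exact h
  | @cons a b x hab p ih =>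
    apply ih
    by_cases he : s(a, b) = s(u, v)
    · rw [Sym2.eq_iff] at he
      rcases he with ⟨rfl, rfl⟩ | ⟨rfl, rfl⟩
      · exact Or.inr (Reachable.refl _)
      · exact Or.inl (Reachable.refl _)
    · have hd : (G.deleteEdges {s(u,v)}).Adj a b := by
        simp only [deleteEdges_adj, Set.mem_singleton_iff]
        exact ⟨hab, he⟩
      rcases h with h | h
      · exact Or.inl (h.trans hd.toWalk.reachable)
      · exact Or.inr (h.trans hd.toWalk.reachable)

private lemma aux_cover {G : SimpleGraph V} (hc : G.Connected) (u v x : V) :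
    (G.deleteEdges {s(u,v)}).Reachable u x ∨ (G.deleteEdges {s(u,v)}).Reachable v x := by
  obtain ⟨p⟩ := hc.preconnected u x
  exact aux_closed p (Or.inl (Reachable.refl _))

private lemma induce_walk_reach {G : SimpleGraph V} {s : Set V} {a b : ↥s} {u w : V}
    (hw : w ∉ s) (p : (G.induce s).Walk a b) :
    (G.deleteEdges {s(u,w)}).Reachable ↑a ↑b := by
  induction p with
  | nil => exact Reachable.refl _
  | @cons a b c h p ih =>
    have hadj : G.Adj ↑a ↑b := h
    have hne : s((a : V), (b : V)) ≠ s(u, w) := by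
      intro heq
      rw [Sym2.eq_iff] at heq
      rcases heq with ⟨rfl, rfl⟩ | ⟨rfl, rfl⟩
      · exact hw b.2
      · exact hw a.2
    have hd : (G.deleteEdges {s(u,w)}).Adj ↑a ↑b := by
      simp only [deleteEdges_adj, Set.mem_singleton_iff]
      exact ⟨hadj, hne⟩
    exact hd.toWalk.reachable.trans ih

private lemma walk_to_induce {G : SimpleGraph V} {s : Set V} :
    ∀ {a b : V} (p : G.Walk a b) (hp : ∀ x ∈ p.support, x ∈ s),
    (G.induce s).Reachable ⟨a, hp a p.start_mem_support⟩ ⟨b, hp b p.end_mem_support⟩ := by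
  intro a b p
  induction p with
  | nil => intro hp; exact Reachable.refl _
  | @cons a c b h p ih =>
    intro hp
    have hps : ∀ x ∈ p.support, x ∈ s := fun x hx => hp x (by simp [hx])
    have hstep : (G.induce s).Adj ⟨a, hp a (Walk.start_mem_support _)⟩
        ⟨c, hps c p.start_mem_support⟩ := h
    exact hstep.toWalk.reachable.trans (ih hps)

private lemma exists_nbr {G : SimpleGraph V} [DecidableEq V] {w r : V} (hc : G.Connected) (hne : r ≠ w) :
    ∃ u, G.Adj w u ∧ ∃ q : G.Walk u r, w ∉ q.support := by
  obtain ⟨p'⟩ := hc.preconnected w r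
  have hp : (p'.toPath : G.Walk w r).IsPath := p'.toPath.2
  have hnn : ¬ (p'.toPath : G.Walk w r).Nil := Walk.not_nil_of_ne (Ne.symm hne)
  obtain ⟨u, h, q, hq⟩ := Walk.not_nil_iff.mp hnn
  rw [hq, Walk.cons_isPath_iff] at hp
  exact ⟨u, h, q, hp.2⟩

end aux

/-- Let `T` be a finite tree, `X` a set of vertices containing every leaf, and `{A, B}` a
partition of `X` into two nonempty sets such that no edge of `T` induces the `X`-split
`{A, B}` and the `X`-split induced by every edge of `T` is compatible with `{A, B}`.
(The `X`-split induced by an edge `s(u, v)` is the unordered pair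
`{X ∩ Wᵤ, X ∩ Wᵥ}` where `Wᵤ`, `Wᵥ` are the vertex sets of the two connected components of
`T` with that edge deleted, i.e. the vertices reachable from `u` resp. `v`; two unordered
pairs are compatible when one of the four pairwise intersections is empty.)
Then there is a unique vertex `w` such that for every connected component `W` of `T` with
`w` deleted, either `X ∩ W ⊆ A` or `X ∩ W ⊆ B`. -/
theorem stmt_4 {V : Type*} [Fintype V] [DecidableEq V] (G : SimpleGraph V)
    [DecidableRel G.Adj] (hT : G.IsTree) (X A B : Set V)
    (hleaf : ∀ v : V, G.degree v = 1 → v ∈ X)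
    (hAne : A.Nonempty) (hBne : B.Nonempty) (hdisj : A ∩ B = ∅) (hunion : A ∪ B = X)
    (hnosplit : ∀ u v : V, G.Adj u v →
      ¬ ((X ∩ {x | (G.deleteEdges {s(u, v)}).Reachable u x} = A ∧
          X ∩ {x | (G.deleteEdges {s(u, v)}).Reachable v x} = B) ∨
         (X ∩ {x | (G.deleteEdges {s(u, v)}).Reachable u x} = B ∧
          X ∩ {x | (G.deleteEdges {s(u, v)}).Reachable v x} = A)))
    (hcompat : ∀ u v : V, G.Adj u v →
      (X ∩ {x | (G.deleteEdges {s(u, v)}).Reachable u x}) ∩ A = ∅ ∨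
      (X ∩ {x | (G.deleteEdges {s(u, v)}).Reachable u x}) ∩ B = ∅ ∨
      (X ∩ {x | (G.deleteEdges {s(u, v)}).Reachable v x}) ∩ A = ∅ ∨
      (X ∩ {x | (G.deleteEdges {s(u, v)}).Reachable v x}) ∩ B = ∅) :
    ∃! w : V, ∀ c : (G.induce ({w}ᶜ : Set V)).ConnectedComponent,
      X ∩ (Subtype.val '' c.supp) ⊆ A ∨ X ∩ (Subtype.val '' c.supp) ⊆ B := by
  classical
  have hconn := hT.isConnected
  have hacyc := hT.IsAcyclic
  have hbridge : ∀ {u v : V}, G.Adj u v → ¬ (G.deleteEdges {s(u,v)}).Reachable u v := by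
    intro u v h
    exact isBridge_iff.mp ((isAcyclic_iff_forall_adj_isBridge.mp hacyc) h)
  have hswap : ∀ u v : V, G.deleteEdges {s(u,v)} = G.deleteEdges {s(v,u)} := by
    intro u v; rw [Sym2.eq_swap]
  have hsideswap : ∀ u v : V, Side G v u = {x | (G.deleteEdges {s(u,v)}).Reachable v x} := by
    intro u v; rw [Side_def, hswap v u]
  have hcover : ∀ {u v : V}, G.Adj u v → ∀ x, x ∈ Side G u v ∨ x ∈ Side G v u := by
    intro u v _ x
    have := aux_cover (G := G) hconn u v x
    rcases this with h | h
    · exact Or.inl h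
    · right; rw [hsideswap u v]; exact h
  have hdisjside : ∀ {u v : V}, G.Adj u v → ∀ x, x ∈ Side G u v → x ∈ Side G v u → False := by
    intro u v h x h1 h2
    rw [hsideswap u v] at h2
    exact hbridge h (h1.trans h2.symm)
  have hmemX : ∀ {z : V}, z ∈ X → z ∈ A ∨ z ∈ B := by
    intro z hz; rw [← hunion] at hz; exact hz
  have hnAB : ∀ {z : V}, z ∈ A → z ∈ B → False := by
    intro z ha hb
    have : z ∈ A ∩ B := ⟨ha, hb⟩
    rw [hdisj] at this; exact this
  -- at least one side of each edge is pure
  have honeside : ∀ {u v : V}, G.Adj u v →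
      (X ∩ Side G u v ⊆ A ∨ X ∩ Side G u v ⊆ B) ∨
      (X ∩ Side G v u ⊆ A ∨ X ∩ Side G v u ⊆ B) := by
    intro u v h
    have hc := hcompat u v h
    rw [← hsideswap u v] at hc
    have hBsub : ∀ {s : Set V}, (X ∩ s) ∩ A = ∅ → X ∩ s ⊆ B := by
      intro s hs z hz
      rcases hmemX hz.1 with hA | hB
      · exact absurd (hs ▸ ⟨hz, hA⟩ : z ∈ (∅ : Set V)) (Set.notMem_empty z)
      · exact hB
    have hAsub : ∀ {s : Set V}, (X ∩ s) ∩ B = ∅ → X ∩ s ⊆ A := by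
      intro s hs z hz
      rcases hmemX hz.1 with hA | hB
      · exact hA
      · exact absurd (hs ▸ ⟨hz, hB⟩ : z ∈ (∅ : Set V)) (Set.notMem_empty z)
    rcases hc with h1 | h1 | h1 | h1
    · exact Or.inl (Or.inr (hBsub h1))
    · exact Or.inl (Or.inl (hAsub h1))
    · exact Or.inr (Or.inr (hBsub h1))
    · exact Or.inr (Or.inl (hAsub h1))
  -- not both sides pure
  have hmixed : ∀ {u v : V}, G.Adj u v → X ∩ Side G u v ⊆ A → X ∩ Side G v u ⊆ B →
      X ∩ Side G u v = A ∧ X ∩ Side G v u = B := by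
    intro u v h h1 h2
    constructor
    · refine Set.Subset.antisymm h1 fun z hz => ?_
      have hzX : z ∈ X := by rw [← hunion]; exact Or.inl hz
      rcases hcover h z with hs | hs
      · exact ⟨hzX, hs⟩
      · exact absurd (h2 ⟨hzX, hs⟩) (fun hB => hnAB hz hB)
    · refine Set.Subset.antisymm h2 fun z hz => ?_
      have hzX : z ∈ X := by rw [← hunion]; exact Or.inr hz
      rcases hcover h z with hs | hs
      · exact absurd (h1 ⟨hzX, hs⟩) (fun hA => hnAB hA hz)
      · exact ⟨hzX, hs⟩
  have hnotboth : ∀ {u v : V}, G.Adj u v →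
      (X ∩ Side G u v ⊆ A ∨ X ∩ Side G u v ⊆ B) →
      (X ∩ Side G v u ⊆ A ∨ X ∩ Side G v u ⊆ B) → False := by
    intro u v h hp1 hp2
    have hns := hnosplit u v h
    rw [← hsideswap u v] at hns
    rcases hp1 with h1 | h1 <;> rcases hp2 with h2 | h2
    · -- both ⊆ A : then X ⊆ A, contradicting B nonempty
      obtain ⟨zb, hzb⟩ := hBne
      have hzbX : zb ∈ X := by rw [← hunion]; exact Or.inr hzb
      rcases hcover h zb with hs | hs
      · exact hnAB (h1 ⟨hzbX, hs⟩) hzb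
      · exact hnAB (h2 ⟨hzbX, hs⟩) hzb
    · exact hns (Or.inl (hmixed h h1 h2))
    · obtain ⟨he1, he2⟩ := hmixed h.symm h2 h1
      exact hns (Or.inr ⟨he2, he1⟩)
    · -- both ⊆ B : contradicting A nonempty
      obtain ⟨za, hza⟩ := hAne
      have hzaX : za ∈ X := by rw [← hunion]; exact Or.inl hza
      rcases hcover h za with hs | hs
      · exact hnAB hza (h1 ⟨hzaX, hs⟩)
      · exact hnAB hza (h2 ⟨hzaX, hs⟩)
  -- existence of a "good" vertex by counting
  have hgoodex : ∃ w : V, ∀ u, G.Adj u w → (X ∩ Side G u w ⊆ A ∨ X ∩ Side G u w ⊆ B) := by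
    by_contra hno
    push_neg at hno
    choose f hadj hnA hnB using hno
    have hpure : ∀ w, X ∩ Side G w (f w) ⊆ A ∨ X ∩ Side G w (f w) ⊆ B := by
      intro w
      rcases honeside (hadj w) with h1 | h1
      · rcases h1 with h1 | h1
        · exact absurd h1 (hnA w)
        · exact absurd h1 (hnB w)
      · exact h1
    let P : G.Dart → Prop := fun d => X ∩ Side G d.toProd.1 d.toProd.2 ⊆ A ∨
      X ∩ Side G d.toProd.1 d.toProd.2 ⊆ B
    have hcard1 : Fintype.card V ≤ Fintype.card {d : G.Dart // P d} := by
      have hinj : Function.Injective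
          (fun w : V => (⟨⟨(w, f w), (hadj w).symm⟩, hpure w⟩ : {d : G.Dart // P d})) := by
        intro w1 w2 hww
        have := congrArg (fun d : {d : G.Dart // P d} => d.1.toProd.1) hww
        exact this
      exact Fintype.card_le_of_injective _ hinj
    have hbij : Function.Bijective
        (fun d : {d : G.Dart // P d} => (⟨d.1.edge, d.1.edge_mem⟩ : G.edgeSet)) := by
      constructor
      · intro d d' hdd
        have hedge : d.1.edge = d'.1.edge := congrArg Subtype.val hdd
        rcases (G.dart_edge_eq_iff d.1 d'.1).mp hedge with h | h
        · exact Subtype.ext h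
        · exfalso
          have hd2 := d.2
          rw [h] at hd2
          have hd2' : X ∩ Side G d'.1.toProd.2 d'.1.toProd.1 ⊆ A ∨
              X ∩ Side G d'.1.toProd.2 d'.1.toProd.1 ⊆ B := hd2
          exact hnotboth d'.1.adj d'.2 hd2'
      · rintro ⟨e, he⟩
        induction e using Sym2.ind with
        | _ u v =>
          have h : G.Adj u v := he
          rcases honeside h with hp | hp
          · exact ⟨⟨⟨(u, v), h⟩, hp⟩, rfl⟩
          · refine ⟨⟨⟨(v, u), h.symm⟩, hp⟩, ?_⟩
            apply Subtype.ext
            simp [Dart.edge, Sym2.eq_swap]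
    have hcard2 : Fintype.card {d : G.Dart // P d} = Fintype.card G.edgeSet :=
      Fintype.card_of_bijective hbij
    have hcard3 : G.edgeFinset.card + 1 = Fintype.card V := hT.card_edgeFinset
    rw [edgeFinset_card] at hcard3
    omega
  obtain ⟨w, hw⟩ := hgoodex
  -- good vertices satisfy the component property
  have hprop : ∀ w₀ : V, (∀ u, G.Adj u w₀ → (X ∩ Side G u w₀ ⊆ A ∨ X ∩ Side G u w₀ ⊆ B)) →
      ∀ c : (G.induce ({w₀}ᶜ : Set V)).ConnectedComponent,
        X ∩ (Subtype.val '' c.supp) ⊆ A ∨ X ∩ (Subtype.val '' c.supp) ⊆ B := by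
    intro w₀ hgood c
    obtain ⟨⟨r, hr⟩, hrc⟩ := c.exists_rep
    have hrw : r ≠ w₀ := hr
    obtain ⟨u, hadj, q, hwq⟩ := exists_nbr hconn hrw
    have hur : r ∈ Side G u w₀ := by
      rw [Side_def, Set.mem_setOf_eq, hswap u w₀]
      exact walk_avoid q hwq (s(w₀, u)) (by simp)
    have hsub : (Subtype.val '' c.supp : Set V) ⊆ Side G u w₀ := by
      rintro z ⟨⟨z', hz'⟩, hzc, rfl⟩
      rw [ConnectedComponent.mem_supp_iff, ← hrc] at hzc
      have hreach := ConnectedComponent.eq.mp hzc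
      obtain ⟨pw⟩ := hreach.symm
      have hres : (G.deleteEdges {s(u, w₀)}).Reachable r z' :=
        induce_walk_reach (u := u) (w := w₀) (by simp) pw
      exact hur.trans hres
    rcases hgood u hadj.symm with hA | hB
    · exact Or.inl fun z hz => hA ⟨hz.1, hsub hz.2⟩
    · exact Or.inr fun z hz => hB ⟨hz.1, hsub hz.2⟩
  -- vertices with the component property are good
  have hgoodofprop : ∀ y : V,
      (∀ c : (G.induce ({y}ᶜ : Set V)).ConnectedComponent,
        X ∩ (Subtype.val '' c.supp) ⊆ A ∨ X ∩ (Subtype.val '' c.supp) ⊆ B) →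
      ∀ u, G.Adj u y → (X ∩ Side G u y ⊆ A ∨ X ∩ Side G u y ⊆ B) := by
    intro y hy u hadj
    have hu : u ∈ ({y}ᶜ : Set V) := hadj.ne
    set c := (G.induce ({y}ᶜ : Set V)).connectedComponentMk ⟨u, hu⟩ with hc
    have hsub : X ∩ Side G u y ⊆ X ∩ (Subtype.val '' c.supp) := by
      rintro z ⟨hzX, hz⟩
      refine ⟨hzX, ?_⟩
      obtain ⟨pw, hwp⟩ := reach_notMem (hbridge hadj) hz
      have hwq : y ∉ (pw.mapLe (G.deleteEdges_le _)).support := by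
        rw [mapLe_support]; exact hwp
      have hmem : ∀ x ∈ (pw.mapLe (G.deleteEdges_le _)).support, x ∈ ({y}ᶜ : Set V) := by
        intro x hx hxy
        have hxey : x = y := hxy
        subst hxey
        exact hwq hx
      have hreach := walk_to_induce (G := G) (s := ({y}ᶜ : Set V))
        (pw.mapLe (G.deleteEdges_le _)) hmem
      have hzy : z ∈ ({y}ᶜ : Set V) :=
        hmem z (pw.mapLe (G.deleteEdges_le _)).end_mem_support
      refine ⟨⟨z, hzy⟩, ?_, rfl⟩
      rw [ConnectedComponent.mem_supp_iff, hc]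
      exact ConnectedComponent.sound hreach.symm
    rcases hy c with hA | hB
    · exact Or.inl fun z hz => hA (hsub hz)
    · exact Or.inr fun z hz => hB (hsub hz)
  -- uniqueness of good vertices
  have hstep : ∀ {a b c : V}, G.Adj a b → G.Adj b c → a ≠ c →
      ¬(X ∩ Side G a b ⊆ A ∨ X ∩ Side G a b ⊆ B) →
      ¬(X ∩ Side G b c ⊆ A ∨ X ∩ Side G b c ⊆ B) := by
    intro a b c hab hbc hac hnp
    have hss : Side G a b ⊆ Side G b c := by
      intro x hx
      obtain ⟨pw, hwp⟩ := reach_notMem (hbridge hab) hx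
      have h1 : (G.deleteEdges {s(b, c)}).Reachable a x :=
        walk_avoid' (G.deleteEdges_le _) pw hwp (s(b, c)) (by simp)
      have h2 : (G.deleteEdges {s(b, c)}).Adj b a := by
        simp only [deleteEdges_adj, Set.mem_singleton_iff]
        refine ⟨hab.symm, ?_⟩
        intro heq
        rw [Sym2.eq_iff] at heq
        rcases heq with ⟨-, hac'⟩ | ⟨hbc', -⟩
        · exact hac hac'
        · exact hbc.ne hbc'
      exact h2.toWalk.reachable.trans h1
    intro hp
    rw [not_or] at hnp
    obtain ⟨hnA, hnB⟩ := hnp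
    rcases hp with hA | hB
    · obtain ⟨z, hz, hzA⟩ := Set.not_subset.mp hnA
      exact hzA (hA ⟨hz.1, hss hz.2⟩)
    · obtain ⟨z, hz, hzB⟩ := Set.not_subset.mp hnB
      exact hzB (hB ⟨hz.1, hss hz.2⟩)
  have hgooduniq : ∀ y : V, (∀ u, G.Adj u y → (X ∩ Side G u y ⊆ A ∨ X ∩ Side G u y ⊆ B)) →
      y = w := by
    intro y hgy
    by_contra hne
    obtain ⟨p'⟩ := hconn.preconnected y w
    have hp : (p'.toPath : G.Walk y w).IsPath := p'.toPath.2
    have hnn : ¬ (p'.toPath : G.Walk y w).Nil := Walk.not_nil_of_ne hne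
    obtain ⟨u', h', q', hq'⟩ := Walk.not_nil_iff.mp hnn
    rw [hq'] at hp
    have hnp : ¬(X ∩ Side G y u' ⊆ A ∨ X ∩ Side G y u' ⊆ B) := by
      intro hpp
      exact hnotboth h' hpp (hgy u' h'.symm)
    have key : ∀ (w₀ b : V) (qq : G.Walk b w₀) (a : V) (hab : G.Adj a b),
        ¬(X ∩ Side G a b ⊆ A ∨ X ∩ Side G a b ⊆ B) → (Walk.cons hab qq).IsPath →
        (∀ u, G.Adj u w₀ → (X ∩ Side G u w₀ ⊆ A ∨ X ∩ Side G u w₀ ⊆ B)) → False := by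
      intro w₀ b qq
      induction qq with
      | nil => intro a hab hnp' _ hgw; exact hnp' (hgw a hab)
      | @cons b c w' hbc qq ih =>
        intro a hab hnp' hpth hgw
        rw [Walk.cons_isPath_iff] at hpth
        have hcs : c ∈ (Walk.cons hbc qq).support := by
          rw [Walk.support_cons]
          exact List.mem_cons_of_mem _ qq.start_mem_support
        have hac : a ≠ c := fun hh => hpth.2 (hh.symm ▸ hcs)
        exact ih b hbc (hstep hab hbc hac hnp') hpth.1 hgw
    exact key w u' q' y h' hnp hp hw
  exact ⟨w, hprop w hw, fun y hy => hgooduniq y (hgoodofprop y hy)⟩
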